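/- Let r ≥ 0, and suppose γ̂ > 0 satisfies log₂(1+γ̂) ≥ r. Define g(γ) = q₁·q₂^(M(γ)) − 1 with q₁ = 2^r, q₂ = e^(Q⁻¹(ε_th)/√n), M(γ) = sqrt(1 − 1/(1+γ)²), and suppose g(γ̂) = γ̂. Then the derivative of g at the fixed point satisfies |g'(γ̂)| = |log₂(1+γ̂) − r| / (γ̂(γ̂+2)·log₂e), and consequently |g'(γ̂)| < ln 2 < 1. -/

import Mathlib

open Real Set

/-- Contraction estimate at the fixed point of `g(γ) = q₁·q₂^{M(γ)} − 1` with
`q₁ = 2^r`, `q₂ = e^a` (with `a = Q⁻¹(ε_th)/√n` an arbitrary real),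
`M(γ) = √(1 − 1/(1+γ)²)`: if `γ̂ > 0` is a fixed point with `log₂(1+γ̂) ≥ r ≥ 0`,
then `|g'(γ̂)| = |log₂(1+γ̂) − r| / (γ̂(γ̂+2)·log₂ e)` and `|g'(γ̂)| < ln 2 < 1`. -/
theorem stmt_7 (r a γhat : ℝ) (hr : 0 ≤ r) (hγ : 0 < γhat)
    (hcap : r ≤ Real.logb 2 (1 + γhat))
    (g : ℝ → ℝ)
    (hg : g = fun γ : ℝ =>
      (2:ℝ) ^ r * Real.exp a ^ Real.sqrt (1 - 1 / (1 + γ) ^ 2) - 1)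
    (hfix : g γhat = γhat) :
    |deriv g γhat| =
      |Real.logb 2 (1 + γhat) - r| / (γhat * (γhat + 2) * (Real.log 2)⁻¹) ∧
    |deriv g γhat| < Real.log 2 ∧ Real.log 2 < 1 := by
  have hc : (0:ℝ) < 1 + γhat := by linarith
  have hc1 : (1:ℝ) < 1 + γhat := by linarith
  have hcsq : (1:ℝ) < (1+γhat)^2 := by nlinarith
  have hh : (0:ℝ) < 1 - 1/(1+γhat)^2 := by
    have h' : 1/(1+γhat)^2 < 1 := by
      rw [div_lt_one (by positivity)]; exact hcsq
    linarith
  set s := Real.sqrt (1 - 1/(1+γhat)^2) with hs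
  have hspos : 0 < s := Real.sqrt_pos.mpr hh
  have hs2 : s^2 = 1 - 1/(1+γhat)^2 := Real.sq_sqrt hh.le
  have hg' : g = fun γ : ℝ => (2:ℝ)^r * Real.exp (a * Real.sqrt (1 - 1/(1+γ)^2)) - 1 := by
    rw [hg]; funext γ; rw [Real.exp_mul]
  -- derivative chain
  have h0 : HasDerivAt (fun γ : ℝ => 1+γ) 1 γhat := by
    simpa using (hasDerivAt_id γhat).const_add 1
  have h1 : HasDerivAt (fun γ : ℝ => (1+γ)^2) (2*(1+γhat)) γhat := by
    have := h0.pow 2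
    simpa [mul_comm, Pi.pow_def] using this
  have h2 : HasDerivAt (fun γ : ℝ => 1/(1+γ)^2) (-(2*(1+γhat))/((1+γhat)^2)^2) γhat := by
    simpa [one_div, Pi.inv_def] using h1.inv (by positivity)
  have H1 : HasDerivAt (fun γ : ℝ => 1 - 1/(1+γ)^2) (2/(1+γhat)^3) γhat := by
    have h3 := h2.const_sub 1
    refine h3.congr_deriv ?_
    rw [neg_div, neg_neg, div_eq_div_iff (by positivity) (by positivity)]
    ring
  have H2 : HasDerivAt (fun γ : ℝ => Real.sqrt (1 - 1/(1+γ)^2)) ((2/(1+γhat)^3)/(2*s)) γhat :=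
    H1.sqrt (ne_of_gt hh)
  have H3 := ((H2.const_mul a).exp.const_mul ((2:ℝ)^r)).sub_const 1
  have hDval : deriv g γhat
      = (2:ℝ)^r * (Real.exp (a*s) * (a * ((2/(1+γhat)^3)/(2*s)))) := by
    rw [hg']; exact H3.deriv
  -- fixed point
  have hfp : (2:ℝ)^r * Real.exp (a*s) = 1 + γhat := by
    rw [hg'] at hfix; simp only at hfix; linarith
  have halog : r * Real.log 2 + a * s = Real.log (1+γhat) := by
    have := congrArg Real.log hfp
    rwa [Real.log_mul (by positivity) (Real.exp_ne_zero _), Real.log_rpow two_pos,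
      Real.log_exp] at this
  have hP : 0 < γhat*(γhat+2) := by nlinarith
  have hkey : deriv g γhat
      = (Real.log (1+γhat) - r * Real.log 2) / (γhat*(γhat+2)) := by
    have ha : a = (Real.log (1+γhat) - r * Real.log 2)/s := by
      field_simp; linarith
    rw [hDval, ← mul_assoc, hfp, ha]
    have hprod : γhat*(γhat+2) = (1+γhat)^2 * s^2 := by
      rw [hs2]; field_simp; ring
    rw [hprod]
    field_simp
  have hlog2 : 0 < Real.log 2 := Real.log_pos one_lt_two
  have hlogb : Real.logb 2 (1+γhat) - r
      = (Real.log (1+γhat) - r*Real.log 2)/Real.log 2 := by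
    rw [Real.logb]; field_simp
  have hL : Real.log (1+γhat) < γhat := by
    have := Real.log_lt_sub_one_of_pos hc (by linarith : (1:ℝ)+γhat ≠ 1)
    linarith
  have hnum : 0 ≤ Real.log (1+γhat) - r*Real.log 2 := by
    have h' : r * Real.log 2 ≤ Real.log (1+γhat) := by
      have h2' := hcap
      rw [Real.logb] at h2'
      calc r * Real.log 2 ≤ (Real.log (1+γhat)/Real.log 2) * Real.log 2 := by nlinarith
        _ = Real.log (1+γhat) := by field_simp
    linarith
  refine ⟨?_, ?_, ?_⟩
  · rw [hkey, hlogb, abs_div, abs_div, abs_of_pos hP, abs_of_pos hlog2,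
      abs_of_nonneg hnum]
    field_simp
  · rw [hkey, abs_of_nonneg (div_nonneg hnum hP.le)]
    have hhalf : (Real.log (1+γhat) - r*Real.log 2)/(γhat*(γhat+2)) < 1/2 := by
      rw [div_lt_iff₀ hP]
      nlinarith [mul_nonneg hr hlog2.le]
    linarith [Real.log_two_gt_d9]
  · linarith [Real.log_two_lt_d9]
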